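/- Let n₁, n₂ be linearly independent unit vectors in ℝ³ and v₁, v₂ ∈ ℝ³ with d = det(n₁, n₂, v₁ − v₂) ≠ 0. Then the improper double integral (1/(4π)) ∫_{−∞}^{∞} ∫_{−∞}^{∞} det(n₁, n₂, γ₁(s) − γ₂(t)) / |γ₁(s) − γ₂(t)|³ ds dt, where γ₁(s) = n₁ s + v₁ and γ₂(t) = n₂ t + v₂, converges and equals (1/2)·sign(d). -/

import Mathlib

open Matrix MeasureTheory Real

open Filter Topology RealInnerProductSpace

/-- The scalar triple product `det(a, b, c)` of three vectors of Euclidean 3-space. -/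
def tripleDet (a b c : EuclideanSpace ℝ (Fin 3)) : ℝ :=
  (Matrix.of ![fun i => a i, fun i => b i, fun i => c i]).det

lemma tripleDet_const (n₁ n₂ v₁ v₂ : EuclideanSpace ℝ (Fin 3)) (s t : ℝ) :
    tripleDet n₁ n₂ ((s • n₁ + v₁) - (t • n₂ + v₂)) = tripleDet n₁ n₂ (v₁ - v₂) := by
  simp only [tripleDet, Matrix.det_fin_three, Matrix.of_apply, Matrix.cons_val',
    Matrix.cons_val_zero, Matrix.cons_val_one, Matrix.head_cons, Matrix.empty_val',
    Matrix.cons_val_fin_one, Matrix.head_fin_const, Matrix.cons_val_two, Matrix.tail_cons,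
    PiLp.add_apply, PiLp.sub_apply, PiLp.smul_apply, smul_eq_mul]
  ring

lemma tripleDet_sq (x y z : EuclideanSpace ℝ (Fin 3)) :
    (tripleDet x y z)^2 = ⟪x,x⟫*⟪y,y⟫*⟪z,z⟫ + 2*⟪x,y⟫*⟪x,z⟫*⟪y,z⟫
      - ⟪x,x⟫*⟪y,z⟫^2 - ⟪y,y⟫*⟪x,z⟫^2 - ⟪z,z⟫*⟪x,y⟫^2 := by
  simp only [tripleDet, Matrix.det_fin_three, Matrix.of_apply, Matrix.cons_val',
    Matrix.cons_val_zero, Matrix.cons_val_one, Matrix.head_cons, Matrix.empty_val',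
    Matrix.cons_val_fin_one, Matrix.head_fin_const, Matrix.cons_val_two, Matrix.tail_cons,
    PiLp.inner_apply, RCLike.inner_apply, conj_trivial, Fin.sum_univ_three]
  ring

lemma norm_expand (n₁ n₂ w : EuclideanSpace ℝ (Fin 3)) (s t : ℝ) :
    ‖(s • n₁ - t • n₂ + w)‖^2 = s^2*⟪n₁,n₁⟫ + t^2*⟪n₂,n₂⟫ - 2*s*t*⟪n₁,n₂⟫
      + 2*s*⟪n₁,w⟫ - 2*t*⟪n₂,w⟫ + ⟪w,w⟫ := by
  rw [← real_inner_self_eq_norm_sq]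
  simp only [inner_add_left, inner_add_right, inner_sub_left, inner_sub_right,
    real_inner_smul_left, real_inner_smul_right]
  rw [real_inner_comm n₂ n₁, real_inner_comm w n₁, real_inner_comm w n₂]
  ring

lemma oneD_base {β : ℝ} (hβ : 0 < β) :
    Integrable (fun t : ℝ => 1 / Real.sqrt (t ^ 2 + β ^ 2) ^ 3) ∧
    ∫ t : ℝ, 1 / Real.sqrt (t ^ 2 + β ^ 2) ^ 3 = 2 / β ^ 2 := by
  have hpos : ∀ t : ℝ, 0 < t ^ 2 + β ^ 2 := fun t => by positivity
  set F : ℝ → ℝ := fun t => t / (β ^ 2 * Real.sqrt (t ^ 2 + β ^ 2)) with hF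
  have hderiv : ∀ t : ℝ, HasDerivAt F (1 / Real.sqrt (t ^ 2 + β ^ 2) ^ 3) t := by
    intro t
    have h1 : HasDerivAt (fun t : ℝ => t ^ 2 + β ^ 2) (2 * t) t := by
      simpa using ((hasDerivAt_pow 2 t).add_const (β ^ 2))
    have h2 : HasDerivAt (fun t : ℝ => Real.sqrt (t ^ 2 + β ^ 2))
        (1 / (2 * Real.sqrt (t ^ 2 + β ^ 2)) * (2 * t)) t :=
      (Real.hasDerivAt_sqrt (hpos t).ne').comp t h1
    have h3 : HasDerivAt (fun t : ℝ => β ^ 2 * Real.sqrt (t ^ 2 + β ^ 2))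
        (β ^ 2 * (1 / (2 * Real.sqrt (t ^ 2 + β ^ 2)) * (2 * t))) t := h2.const_mul _
    have hs : 0 < Real.sqrt (t ^ 2 + β ^ 2) := Real.sqrt_pos.2 (hpos t)
    have hden : β ^ 2 * Real.sqrt (t ^ 2 + β ^ 2) ≠ 0 := by positivity
    have h4 := (hasDerivAt_id t).div h3 hden
    refine (show HasDerivAt F _ t from h4).congr_deriv ?_
    symm
    have hsq : Real.sqrt (t ^ 2 + β ^ 2) ^ 2 = t ^ 2 + β ^ 2 := Real.sq_sqrt (hpos t).le
    field_simp
    rw [id_eq]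
    linear_combination (-1 : ℝ) * hsq
  have htend : Tendsto (fun t : ℝ => t / Real.sqrt (t ^ 2 + β ^ 2)) atTop (𝓝 1) := by
    have h0 : Tendsto (fun t : ℝ => 1 + β ^ 2 / t ^ 2) atTop (𝓝 1) := by
      have h00 : Tendsto (fun t : ℝ => β ^ 2 / t ^ 2) atTop (𝓝 0) :=
        Tendsto.div_atTop tendsto_const_nhds (tendsto_pow_atTop two_ne_zero)
      simpa using tendsto_const_nhds.add h00
    have h1 : Tendsto (fun t : ℝ => Real.sqrt (1 + β ^ 2 / t ^ 2)) atTop (𝓝 1) := by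
      have := (Real.continuous_sqrt.tendsto 1).comp h0
      rw [Real.sqrt_one] at this
      exact this
    have h2 : Tendsto (fun t : ℝ => (Real.sqrt (1 + β ^ 2 / t ^ 2))⁻¹) atTop (𝓝 1) := by
      simpa using h1.inv₀ (by norm_num)
    refine h2.congr' ?_
    filter_upwards [eventually_gt_atTop 0] with t ht
    rw [inv_eq_one_div, eq_comm, div_eq_div_iff (by positivity) (by positivity), one_mul,
      ← Real.sqrt_sq ht.le, ← Real.sqrt_mul (sq_nonneg t)]
    congr 1
    field_simp
    rw [Real.sq_sqrt (sq_nonneg t)]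
  have htop : Tendsto F atTop (𝓝 (1 / β ^ 2)) := by
    have h := htend.const_mul ((β ^ 2)⁻¹)
    rw [mul_one] at h
    have he : F = fun t => (β ^ 2)⁻¹ * (t / Real.sqrt (t ^ 2 + β ^ 2)) := by
      funext t; rw [hF]; ring
    rw [he, one_div]; exact h
  have hbot : Tendsto F atBot (𝓝 (-(1 / β ^ 2))) := by
    have h : Tendsto (fun t : ℝ => -F (-t)) atBot (𝓝 (-(1 / β ^ 2))) :=
      (htop.comp tendsto_neg_atBot_atTop).neg
    refine h.congr fun t => ?_
    simp only [hF, neg_sq, neg_div, neg_neg]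
  have hint : Integrable (fun t : ℝ => 1 / Real.sqrt (t ^ 2 + β ^ 2) ^ 3) := by
    have hc : Continuous fun t : ℝ => 1 / Real.sqrt (t ^ 2 + β ^ 2) ^ 3 := by
      refine continuous_const.div ((Real.continuous_sqrt.comp (by continuity)).pow 3)
        fun t => (pow_pos (Real.sqrt_pos.2 (hpos t)) 3).ne'
    set c : ℝ := β * min 1 (β ^ 2) with hc'
    have hcpos : 0 < c := mul_pos hβ (lt_min one_pos (pow_pos hβ 2))
    refine (integrable_inv_one_add_sq.const_mul (c⁻¹)).mono' hc.aestronglyMeasurable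
      (Eventually.of_forall fun t => ?_)
    rw [Real.norm_eq_abs, abs_of_nonneg (by positivity)]
    have h1 : β * (t ^ 2 + β ^ 2) ≤ Real.sqrt (t ^ 2 + β ^ 2) ^ 3 := by
      have hb : β ≤ Real.sqrt (t ^ 2 + β ^ 2) := by
        have h := Real.sqrt_le_sqrt (show β ^ 2 ≤ t ^ 2 + β ^ 2 by nlinarith [sq_nonneg t])
        rwa [Real.sqrt_sq hβ.le] at h
      calc β * (t ^ 2 + β ^ 2) ≤ Real.sqrt (t ^ 2 + β ^ 2) * (t ^ 2 + β ^ 2) := by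
            exact mul_le_mul_of_nonneg_right hb (hpos t).le
        _ = Real.sqrt (t ^ 2 + β ^ 2) ^ 3 := by
            rw [show Real.sqrt (t ^ 2 + β ^ 2) ^ 3
                = Real.sqrt (t ^ 2 + β ^ 2) ^ 2 * Real.sqrt (t ^ 2 + β ^ 2) from by ring,
              Real.sq_sqrt (hpos t).le]
            ring
    have h2 : c * (1 + t ^ 2) ≤ β * (t ^ 2 + β ^ 2) := by
      have hm1 : min 1 (β ^ 2) * t ^ 2 ≤ 1 * t ^ 2 :=
        mul_le_mul_of_nonneg_right (min_le_left _ _) (sq_nonneg t)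
      have hm2 : min 1 (β ^ 2) ≤ β ^ 2 := min_le_right _ _
      have hkey : min 1 (β ^ 2) * (1 + t ^ 2) ≤ t ^ 2 + β ^ 2 := by nlinarith
      calc c * (1 + t ^ 2) = β * (min 1 (β ^ 2) * (1 + t ^ 2)) := by rw [hc']; ring
        _ ≤ β * (t ^ 2 + β ^ 2) := mul_le_mul_of_nonneg_left hkey hβ.le
    have h3 : c * (1 + t ^ 2) ≤ Real.sqrt (t ^ 2 + β ^ 2) ^ 3 := h2.trans h1
    rw [div_le_iff₀ (by positivity)]
    have h4 : 0 < 1 + t ^ 2 := by positivity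
    calc (1:ℝ) = c⁻¹ * (1 + t ^ 2)⁻¹ * (c * (1 + t ^ 2)) := by field_simp
      _ ≤ c⁻¹ * (1 + t ^ 2)⁻¹ * Real.sqrt (t ^ 2 + β ^ 2) ^ 3 := by
          exact mul_le_mul_of_nonneg_left h3 (by positivity)
  refine ⟨hint, ?_⟩
  rw [integral_of_hasDerivAt_of_tendsto hderiv hint hbot htop]
  ring

lemma oneD {β : ℝ} (k : ℝ) (hβ : 0 < β) :
    Integrable (fun t : ℝ => 1 / Real.sqrt ((t - k) ^ 2 + β ^ 2) ^ 3) ∧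
    ∫ t : ℝ, 1 / Real.sqrt ((t - k) ^ 2 + β ^ 2) ^ 3 = 2 / β ^ 2 := by
  obtain ⟨hi, hv⟩ := oneD_base hβ
  refine ⟨hi.comp_sub_right k, ?_⟩
  rw [integral_sub_right_eq_self (fun t => 1 / Real.sqrt (t ^ 2 + β ^ 2) ^ 3) k]
  exact hv

lemma outerInt {A C : ℝ} (cc : ℝ) (hA : 0 < A) (hC : 0 < C) :
    Integrable (fun s : ℝ => 2 / (A * (s + cc) ^ 2 + C)) ∧
    ∫ s : ℝ, 2 / (A * (s + cc) ^ 2 + C) = 2 * π / Real.sqrt (A * C) := by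
  set r := Real.sqrt (A / C) with hr
  have hrpos : 0 < r := Real.sqrt_pos.2 (div_pos hA hC)
  have hsq : r ^ 2 = A / C := Real.sq_sqrt (div_pos hA hC).le
  have key : ∀ x : ℝ, 2 / (A * x ^ 2 + C) = (2 / C) * (1 + (r * x) ^ 2)⁻¹ := by
    intro x
    have h1 : (r * x) ^ 2 = A / C * x ^ 2 := by rw [mul_pow, hsq]
    have h2 : 0 < A * x ^ 2 + C := by positivity
    rw [h1]
    field_simp
    ring
  have hfe : (fun s : ℝ => 2 / (A * (s + cc) ^ 2 + C))
      = fun s => (2 / C) * (1 + (r * (s + cc)) ^ 2)⁻¹ := funext fun s => key _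
  have hCr : C * r = Real.sqrt (A * C) := by
    rw [hr, show (C : ℝ) = Real.sqrt (C ^ 2) from (Real.sqrt_sq hC.le).symm,
      ← Real.sqrt_mul (sq_nonneg C)]
    congr 1
    field_simp
    rw [Real.sq_sqrt (sq_nonneg C)]
  constructor
  · rw [hfe]
    exact ((integrable_inv_one_add_sq.comp_mul_left' hrpos.ne').comp_add_right cc).const_mul _
  · rw [hfe, MeasureTheory.integral_const_mul,
      integral_add_right_eq_self (fun s : ℝ => (1 + (r * s) ^ 2)⁻¹) cc,
      MeasureTheory.Measure.integral_comp_mul_left (fun y : ℝ => (1 + y ^ 2)⁻¹) r,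
      integral_univ_inv_one_add_sq, abs_of_pos (inv_pos.2 hrpos), smul_eq_mul, ← hCr]
    field_simp

/-- The Gauss linking integral of two oriented skew straight lines converges and
equals `±1/2`, with sign the sign of the triple product `(n₁, n₂, v₁ − v₂)`. -/
theorem gauss_linking_integral_skew_lines
    (n₁ n₂ v₁ v₂ : EuclideanSpace ℝ (Fin 3))
    (hn₁ : ‖n₁‖ = 1) (hn₂ : ‖n₂‖ = 1)
    (hindep : LinearIndependent ℝ ![n₁, n₂])
    (hd : tripleDet n₁ n₂ (v₁ - v₂) ≠ 0) :
    Integrable (fun p : ℝ × ℝ =>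
        tripleDet n₁ n₂ ((p.1 • n₁ + v₁) - (p.2 • n₂ + v₂))
          / ‖(p.1 • n₁ + v₁) - (p.2 • n₂ + v₂)‖ ^ 3) ∧
    (1 / (4 * π)) * ∫ p : ℝ × ℝ,
        tripleDet n₁ n₂ ((p.1 • n₁ + v₁) - (p.2 • n₂ + v₂))
          / ‖(p.1 • n₁ + v₁) - (p.2 • n₂ + v₂)‖ ^ 3
      = (1 / 2) * Real.sign (tripleDet n₁ n₂ (v₁ - v₂)) := by
  set w : EuclideanSpace ℝ (Fin 3) := v₁ - v₂ with hw
  set d : ℝ := tripleDet n₁ n₂ w with hdd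
  set μ : ℝ := ⟪n₁, n₂⟫ with hμ
  set a : ℝ := ⟪n₁, w⟫ with ha
  set b : ℝ := ⟪n₂, w⟫ with hb
  set N : ℝ := ⟪w, w⟫ with hN
  have hnn₁ : ⟪n₁, n₁⟫ = (1:ℝ) := by rw [real_inner_self_eq_norm_sq, hn₁]; norm_num
  have hnn₂ : ⟪n₂, n₂⟫ = (1:ℝ) := by rw [real_inner_self_eq_norm_sq, hn₂]; norm_num
  -- strict Cauchy–Schwarz
  have hfin := linearIndependent_fin2.mp hindep
  have hne1 : n₁ ≠ n₂ := by
    intro h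
    exact hfin.2 1 (by simp [h])
  have hne2 : n₁ ≠ -n₂ := by
    intro h
    exact hfin.2 (-1) (by simp [h])
  have hμ1 : μ < 1 := (inner_lt_one_iff_real_of_norm_eq_one hn₁ hn₂).2 hne1
  have hμ2 : -μ < 1 := by
    have h := (inner_lt_one_iff_real_of_norm_eq_one hn₁ (by simpa using hn₂ : ‖-n₂‖ = 1)).2 hne2
    rwa [inner_neg_right] at h
  have hA : 0 < 1 - μ ^ 2 := by nlinarith
  set A : ℝ := 1 - μ ^ 2 with hAdef
  set e : ℝ := a - μ * b with he
  set cc : ℝ := e / A with hcc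
  set m : ℝ := N - b ^ 2 - e ^ 2 / A with hm
  have hAm : A * m = d ^ 2 := by
    have hsq := tripleDet_sq n₁ n₂ w
    rw [hnn₁, hnn₂] at hsq
    rw [← hμ, ← ha, ← hb, ← hN, ← hdd] at hsq
    rw [hm, he, hAdef]
    have hA0 : (1:ℝ) - μ ^ 2 ≠ 0 := by rw [← hAdef]; exact hA.ne'
    field_simp
    linear_combination (-1 : ℝ) * hsq
  have hmpos : 0 < m := by
    have hd2 : 0 < d ^ 2 := by positivity
    nlinarith
  have hB : ∀ s : ℝ, 0 < A * (s + cc) ^ 2 + m := fun s => by positivity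
  -- the quadratic form identity
  have hQ : ∀ s t : ℝ, ‖(s • n₁ + v₁) - (t • n₂ + v₂)‖ ^ 2
      = (t - (μ * s + b)) ^ 2 + (A * (s + cc) ^ 2 + m) := by
    intro s t
    have hv : (s • n₁ + v₁) - (t • n₂ + v₂) = s • n₁ - t • n₂ + w := by
      rw [hw]; module
    rw [hv, norm_expand, hnn₁, hnn₂, ← hμ, ← ha, ← hb, ← hN, hm, hcc, he, hAdef]
    have hA0 : (1:ℝ) - μ ^ 2 ≠ 0 := by rw [← hAdef]; exact hA.ne'
    field_simp
    ring
  have hnorm : ∀ s t : ℝ, ‖(s • n₁ + v₁) - (t • n₂ + v₂)‖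
      = Real.sqrt ((t - (μ * s + b)) ^ 2 + (A * (s + cc) ^ 2 + m)) := by
    intro s t
    have h0 : Real.sqrt (‖(s • n₁ + v₁) - (t • n₂ + v₂)‖ ^ 2)
        = ‖(s • n₁ + v₁) - (t • n₂ + v₂)‖ := Real.sqrt_sq (norm_nonneg _)
    rw [← h0, hQ s t]
  -- rewrite the integrand
  have hfun : (fun p : ℝ × ℝ =>
      tripleDet n₁ n₂ ((p.1 • n₁ + v₁) - (p.2 • n₂ + v₂))
        / ‖(p.1 • n₁ + v₁) - (p.2 • n₂ + v₂)‖ ^ 3)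
      = fun p : ℝ × ℝ => d *
        (1 / Real.sqrt ((p.2 - (μ * p.1 + b)) ^ 2 + (A * (p.1 + cc) ^ 2 + m)) ^ 3) := by
    funext p
    rw [tripleDet_const, hnorm p.1 p.2, ← hw, ← hdd]
    ring
  set H : ℝ × ℝ → ℝ := fun p =>
      1 / Real.sqrt ((p.2 - (μ * p.1 + b)) ^ 2 + (A * (p.1 + cc) ^ 2 + m)) ^ 3 with hH
  -- pointwise positivity of the argument
  have hargpos : ∀ p : ℝ × ℝ, 0 < (p.2 - (μ * p.1 + b)) ^ 2 + (A * (p.1 + cc) ^ 2 + m) :=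
    fun p => by have := hB p.1; positivity
  have hHcont : Continuous H := by
    refine continuous_const.div ?_ fun p => (pow_pos (Real.sqrt_pos.2 (hargpos p)) 3).ne'
    exact (Real.continuous_sqrt.comp (by fun_prop)).pow 3
  -- slice integrability and values
  have hslice : ∀ s : ℝ,
      Integrable (fun t : ℝ => H (s, t)) ∧ ∫ t : ℝ, H (s, t) = 2 / (A * (s + cc) ^ 2 + m) := by
    intro s
    have hβ : 0 < Real.sqrt (A * (s + cc) ^ 2 + m) := Real.sqrt_pos.2 (hB s)
    obtain ⟨hi, hv⟩ := oneD (μ * s + b) hβ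
    simp only [Real.sq_sqrt (hB s).le] at hi hv
    exact ⟨hi, hv⟩
  have houter := outerInt cc hA hmpos
  have hHint : Integrable H := by
    refine (integrable_prod_iff hHcont.aestronglyMeasurable).2 ⟨?_, ?_⟩
    · exact Eventually.of_forall fun s => (hslice s).1
    · have : (fun s : ℝ => ∫ t : ℝ, ‖H (s, t)‖) = fun s : ℝ => 2 / (A * (s + cc) ^ 2 + m) := by
        funext s
        rw [← (hslice s).2]
        refine integral_congr_ae (Eventually.of_forall fun t => ?_)
        show ‖H (s, t)‖ = H (s, t)
        rw [Real.norm_eq_abs, abs_of_nonneg]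
        have := hargpos (s, t)
        positivity
      rw [this]
      exact houter.1
  have hHval : ∫ p : ℝ × ℝ, H p = 2 * π / |d| := by
    rw [show ∫ p : ℝ × ℝ, H p = ∫ s : ℝ, ∫ t : ℝ, H (s, t) from integral_prod H hHint]
    have : (fun s : ℝ => ∫ t : ℝ, H (s, t)) = fun s : ℝ => 2 / (A * (s + cc) ^ 2 + m) :=
      funext fun s => (hslice s).2
    rw [this, houter.2, hAm, Real.sqrt_sq_eq_abs]
  constructor
  · rw [hfun]
    exact hHint.const_mul d
  · rw [hfun]
    have : ∫ p : ℝ × ℝ, d * H p = d * (2 * π / |d|) := by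
      rw [MeasureTheory.integral_const_mul, hHval]
    rw [show (fun p : ℝ × ℝ => d *
        (1 / Real.sqrt ((p.2 - (μ * p.1 + b)) ^ 2 + (A * (p.1 + cc) ^ 2 + m)) ^ 3))
        = fun p => d * H p from rfl, this]
    have hdnz : d ≠ 0 := by rw [hdd, ← hw] at *; exact hd
    have hπ : π ≠ 0 := Real.pi_ne_zero
    rcases lt_or_gt_of_ne hdnz with hneg | hpos
    · rw [abs_of_neg hneg, Real.sign_of_neg hneg]
      field_simp
      ring
    · rw [abs_of_pos hpos, Real.sign_of_pos hpos]
      field_simp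
      ring
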